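/- arXiv:1412.5669 — 6 statements merged into one kernel-verified Lean document; each statement's English description precedes it below -/
import Mathlib

section
/- Let G be a finite directed graph with N nodes whose edges carry non-negative integer weights bounded by M. Call a cycle 'Zeno' if all its edges have weight 0. Then every path starting at a fixed initial node whose total weight exceeds M·N contains a node that lies on some cycle that is not Zeno. -/
/-- Total weight of a path given as a list of visited nodes. -/
def pathWeight {V : Type*} (w : V → V → ℕ) : List V → ℕ
  | [] => 0
  | [_] => 0
  | a :: b :: rest => w a b + pathWeight w (b :: rest)

lemma pw_append {V : Type*} (w : V → V → ℕ) :
    ∀ (l1 : List V) (v : V) (l2 : List V),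
    pathWeight w (l1 ++ v :: l2) = pathWeight w (l1 ++ [v]) + pathWeight w (v :: l2)
  | [], v, l2 => by cases l2 <;> simp [pathWeight]
  | [a], v, l2 => by simp [pathWeight, add_assoc]
  | a :: b :: t, v, l2 => by
      have h := pw_append w (b :: t) v l2
      simp only [List.cons_append, pathWeight, List.append_eq] at h ⊢
      omega

lemma pw_bound {V : Type*} (E : V → V → Prop) (w : V → V → ℕ) (M : ℕ)
    (hw : ∀ a b, E a b → w a b ≤ M) :
    ∀ p : List V, List.Chain' E p → pathWeight w p ≤ M * (p.length - 1)
  | [], _ => by simp [pathWeight]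
  | [a], _ => by simp [pathWeight]
  | a :: b :: r, h => by
      rw [List.Chain', List.isChain_cons_cons] at h
      have h1 := hw a b h.1
      have h2 := pw_bound E w M hw (b :: r) h.2
      simp only [pathWeight, List.length_cons] at *
      have : M * (r.length + 1 + 1 - 1) = M * (r.length + 1 - 1) + M := by
        simp [Nat.mul_succ]
      omega

lemma sub2 {V : Type*} : ∀ (l : List V) (x : V), List.Sublist [x, x] l →
    ∃ l1 l2 l3, l = l1 ++ x :: l2 ++ x :: l3 := by
  intro l
  induction l with
  | nil => intro x h; exact absurd (List.eq_nil_of_sublist_nil h) (by simp)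
  | cons a t ih =>
    intro x h
    cases h with
    | cons _ h' =>
      obtain ⟨l1, l2, l3, rfl⟩ := ih x h'
      exact ⟨a :: l1, l2, l3, rfl⟩
    | cons_cons _ h' =>
      have hx : a ∈ t := by
        have := h'.subset; simp_all
      obtain ⟨s, u, rfl⟩ := List.append_of_mem hx
      exact ⟨[], s, u, rfl⟩

/-- Every path from `g0` of total weight exceeding `M * N` (N the number of
nodes) contains a node lying on a non-Zeno cycle. -/
theorem stmt0 {V : Type*} [Fintype V] (E : V → V → Prop) (w : V → V → ℕ)
    (M : ℕ) (hw : ∀ a b, E a b → w a b ≤ M) (g0 : V) :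
    ∀ p : List V, p.head? = some g0 → List.Chain' E p →
      M * Fintype.card V < pathWeight w p →
      ∃ v ∈ p, ∃ c : List V, 2 ≤ c.length ∧ c.head? = some v ∧
        c.getLast? = some v ∧ List.Chain' E c ∧ 0 < pathWeight w c := by
  suffices H : ∀ n : ℕ, ∀ p : List V, p.length ≤ n → p.head? = some g0 →
      List.Chain' E p → M * Fintype.card V < pathWeight w p →
      ∃ v ∈ p, ∃ c : List V, 2 ≤ c.length ∧ c.head? = some v ∧
        c.getLast? = some v ∧ List.Chain' E c ∧ 0 < pathWeight w c by
    intro p h1 h2 h3; exact H p.length p le_rfl h1 h2 h3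
  intro n
  induction n using Nat.strong_induction_on with
  | _ n ih =>
    intro p hlen hhead hchain hlt
    by_cases hnd : p.Nodup
    · exfalso
      have hle : p.length ≤ Fintype.card V := hnd.length_le_card
      have hb := pw_bound E w M hw p hchain
      have : M * (p.length - 1) ≤ M * Fintype.card V :=
        Nat.mul_le_mul_left M (by omega)
      omega
    · obtain ⟨x, hdup⟩ := List.exists_duplicate_iff_not_nodup.mpr hnd
      have hsub : List.Sublist [x, x] p := List.duplicate_iff_sublist.mp hdup
      obtain ⟨l1, l2, l3, rfl⟩ := sub2 p x hsub
      -- the cycle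
      set cyc : List V := x :: l2 ++ [x] with hcyc
      have hdecomp : l1 ++ x :: l2 ++ x :: l3 = l1 ++ cyc ++ l3 := by
        simp [hcyc]
      -- chains
      have hch : List.Chain' E (l1 ++ (x :: (l2 ++ x :: l3))) := by
        simpa using hchain
      rw [List.Chain', List.isChain_append] at hch
      obtain ⟨hch1, hch2, hch3⟩ := hch
      have hch2' : List.Chain' E ((x :: l2) ++ (x :: l3)) := by
        exact hch2
      rw [List.Chain', List.isChain_append] at hch2'
      obtain ⟨hcA, hcB, hcC⟩ := hch2'
      have hchcyc : List.Chain' E cyc := by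
        rw [hcyc, List.cons_append, ← List.cons_append, List.Chain', List.isChain_append]
        refine ⟨hcA, List.isChain_singleton x, ?_⟩
        intro a ha b hb
        simp at hb; subst hb
        exact hcC a ha x rfl
      by_cases hpos : 0 < pathWeight w cyc
      · refine ⟨x, by simp, cyc, ?_, ?_, ?_, hchcyc, hpos⟩
        · simp [hcyc]
        · simp [hcyc]
        · rw [hcyc, List.cons_append, ← List.cons_append]
          exact List.getLast?_concat
      · -- zero-weight cycle, remove it
        push_neg at hpos
        have hzero : pathWeight w cyc = 0 := Nat.le_zero.mp hpos
        set p' : List V := l1 ++ x :: l3 with hp'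
        have hweq : pathWeight w (l1 ++ x :: l2 ++ x :: l3) = pathWeight w p' := by
          have h1 := pw_append w l1 x (l2 ++ x :: l3)
          have h2 := pw_append w (x :: l2) x l3
          have h3 := pw_append w l1 x l3
          have h4 : pathWeight w (x :: l2 ++ [x]) = 0 := by simpa [hcyc] using hzero
          simp only [hp', List.cons_append, List.append_assoc] at h1 h2 h3 h4 ⊢
          omega
        have hhead' : p'.head? = some g0 := by
          rw [hp']
          cases l1 <;> simpa using hhead
        have hchain' : List.Chain' E p' := by
          rw [hp', List.Chain', List.isChain_append]
          refine ⟨hch1, hcB, ?_⟩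
          intro a ha b hb
          simp at hb; subst hb
          exact hch3 a ha x (by simp)
        have hlen' : p'.length < n := by
          have : p'.length < (l1 ++ x :: l2 ++ x :: l3).length := by
            simp [hp']
          omega
        obtain ⟨v, hv, c, hc⟩ := ih p'.length hlen' p' le_rfl hhead' hchain'
          (by rw [← hweq] at *; omega)
        refine ⟨v, ?_, c, hc⟩
        rw [hp'] at hv
        simp at hv ⊢
        tauto
end

section
/- The orthogonal projection onto the first coordinate of the intersection of a finite union of sets of the form {n + δ + α·1 : δ ∈ Δ, α ≥ 0} (where Δ is an open simplex with integer vertices inside a unit hypercube and 1 = (1,...,1)) with a convex polyhedron defined by finitely many constraints of the form x_i ∼ n_i (∼ ∈ {<, ≤, =, ≥, >}, n_i ∈ ℕ) is a union of intervals each of whose endpoints is an integer (or the interval is unbounded above). -/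
/-- Comparison operators appearing in guards. -/
inductive CmpOp | lt | le | eq | ge | gt

/-- Satisfaction of an atomic guard constraint. -/
def CmpOp.sat : CmpOp → ℝ → ℝ → Prop
  | .lt, a, b => a < b
  | .le, a, b => a ≤ b
  | .eq, a, b => a = b
  | .ge, a, b => b ≤ a
  | .gt, a, b => b < a

/-- The region simplex determined by a zero-pattern `z` and a weak ordering `ρ`
of the fractional parts: an open simplex (together with its lattice faces)
inside the unit hypercube with integer vertices. -/
def regionSimplex {r : ℕ} (z : Fin (r + 1) → Prop) (ρ : Fin (r + 1) → Fin (r + 1) → Prop) :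
    Set (Fin (r + 1) → ℝ) :=
  {x | (∀ i, 0 ≤ x i ∧ x i < 1) ∧ (∀ i, x i = 0 ↔ z i) ∧
       (∀ i j, x i ≤ x j ↔ ρ i j)}

/-- The simplicial trail `{n + δ + α·𝟙 : δ ∈ Δ, α ≥ 0}`. -/
def simplicialTrail {r : ℕ} (n : Fin (r + 1) → ℕ) (Δ : Set (Fin (r + 1) → ℝ)) :
    Set (Fin (r + 1) → ℝ) :=
  {x | ∃ δ ∈ Δ, ∃ α : ℝ, 0 ≤ α ∧ ∀ i, x i = (n i : ℝ) + δ i + α}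

set_option linter.unusedSectionVars false

namespace Stmt5Aux

/-- Piecewise-linear increasing bijection of `[0,1)` mapping `0 ↦ 0`, `s ↦ s'`. -/
noncomputable def gmap (s s' c : ℝ) : ℝ :=
  if c ≤ s then s' / s * c else s' + (1 - s') / (1 - s) * (c - s)

section gmap
variable {s s' : ℝ} (hs : 0 < s) (hs1 : s < 1) (hs' : 0 < s') (hs'1 : s' < 1)
include hs hs1 hs' hs'1

lemma gmap_strictMono : StrictMono (gmap s s') := by
  intro a b hab
  have h1 : 0 < s' / s := div_pos hs' hs
  have h2 : 0 < (1 - s') / (1 - s) := div_pos (by linarith) (by linarith)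
  have hss : s' / s * s = s' := div_mul_cancel₀ s' (ne_of_gt hs)
  unfold gmap
  split_ifs with ha hb hb
  · exact mul_lt_mul_of_pos_left hab h1
  · push_neg at hb
    have h3 : s' / s * a ≤ s' := by nlinarith
    nlinarith
  · push_neg at ha; linarith
  · push_neg at ha hb
    have := mul_lt_mul_of_pos_left (sub_lt_sub_right hab s) h2
    linarith

lemma gmap_zero : gmap s s' 0 = 0 := by
  unfold gmap; rw [if_pos hs.le]; ring

lemma gmap_s : gmap s s' s = s' := by
  unfold gmap; rw [if_pos le_rfl]; exact div_mul_cancel₀ s' (ne_of_gt hs)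

lemma gmap_one : gmap s s' 1 = 1 := by
  unfold gmap; rw [if_neg (by linarith)]
  have : (1 - s') / (1 - s) * (1 - s) = 1 - s' := div_mul_cancel₀ _ (by linarith)
  linarith

lemma gmap_nonneg {c : ℝ} (hc : 0 ≤ c) : 0 ≤ gmap s s' c := by
  have := (gmap_strictMono hs hs1 hs' hs'1).monotone hc
  rwa [gmap_zero hs hs1 hs' hs'1] at this

lemma gmap_lt_one {c : ℝ} (hc : c < 1) : gmap s s' c < 1 := by
  have := gmap_strictMono hs hs1 hs' hs'1 hc
  rwa [gmap_one hs hs1 hs' hs'1] at this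

lemma gmap_eq_zero_iff {c : ℝ} (hc : 0 ≤ c) : gmap s s' c = 0 ↔ c = 0 := by
  constructor
  · intro h
    by_contra hne
    have : 0 < c := lt_of_le_of_ne hc (Ne.symm hne)
    have := gmap_strictMono hs hs1 hs' hs'1 this
    rw [gmap_zero hs hs1 hs' hs'1, h] at this
    exact lt_irrefl _ this
  · intro h; rw [h]; exact gmap_zero hs hs1 hs' hs'1

end gmap

/-- The extension of `gmap` to `[0,2)`, fixing integer parts. -/
noncomputable def Gmap (s s' u : ℝ) : ℝ :=
  if u < 1 then gmap s s' u else 1 + gmap s s' (u - 1)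

section Gmap
variable {s s' : ℝ} (hs : 0 < s) (hs1 : s < 1) (hs' : 0 < s') (hs'1 : s' < 1)
include hs hs1 hs' hs'1

lemma Gmap_strictMonoOn : StrictMonoOn (Gmap s s') (Set.Ico 0 2) := by
  intro u hu v hv huv
  obtain ⟨hu0, hu2⟩ := hu
  obtain ⟨hv0, hv2⟩ := hv
  unfold Gmap
  split_ifs with h1 h2 h2
  · exact gmap_strictMono hs hs1 hs' hs'1 huv
  · push_neg at h2
    have hA : gmap s s' u < 1 := gmap_lt_one hs hs1 hs' hs'1 h1
    have hB : 0 ≤ gmap s s' (v - 1) := gmap_nonneg hs hs1 hs' hs'1 (by linarith)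
    linarith
  · push_neg at h1; linarith
  · have := gmap_strictMono hs hs1 hs' hs'1 (sub_lt_sub_right huv 1)
    linarith

end Gmap

/-- Guard satisfaction against integer bounds only depends on the floor and on
whether the fractional part vanishes. -/
lemma sat_congr (op : CmpOp) (g : ℤ) {x y : ℝ} (hf : ⌊x⌋ = ⌊y⌋)
    (h0 : Int.fract x = 0 ↔ Int.fract y = 0) : op.sat x (g : ℝ) ↔ op.sat y (g : ℝ) := by
  have hlt : ∀ z : ℝ, z < (g:ℝ) ↔ ⌊z⌋ < g := fun z => Int.floor_lt.symm
  have heq : ∀ z : ℝ, z = (g:ℝ) ↔ (⌊z⌋ = g ∧ Int.fract z = 0) := by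
    intro z
    constructor
    · rintro rfl; exact ⟨Int.floor_intCast g, Int.fract_intCast g⟩
    · rintro ⟨h1, h2⟩
      have := Int.floor_add_fract z
      rw [h1, h2] at this; linarith
  cases op <;> simp only [CmpOp.sat]
  · rw [hlt, hlt, hf]
  · rw [le_iff_lt_or_eq, le_iff_lt_or_eq, hlt, hlt, heq, heq, hf, h0]
  · rw [heq, heq, hf, h0]
  · rw [← not_lt, ← not_lt, hlt, hlt, hf]
  · rw [← not_le, ← not_le, le_iff_lt_or_eq, le_iff_lt_or_eq, hlt, hlt, heq, heq, hf, h0]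

/-- Key lemma: within one simplicial trail, a point whose first coordinate lies in
`(m, m+1)` can be moved to have any first coordinate in `(m, m+1)`, preserving
floors and vanishing of fractional parts of all coordinates. -/
lemma key {r : ℕ} (n : Fin (r + 1) → ℕ) (z : Fin (r + 1) → Prop)
    (ρ : Fin (r + 1) → Fin (r + 1) → Prop) (m : ℤ) {x : Fin (r + 1) → ℝ}
    (hx : x ∈ simplicialTrail n (regionSimplex z ρ))
    (hx0 : (m : ℝ) < x 0) (hx0' : x 0 < m + 1) {t' : ℝ}
    (ht1 : (m : ℝ) < t') (ht2 : t' < m + 1) :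
    ∃ y ∈ simplicialTrail n (regionSimplex z ρ), y 0 = t' ∧
      ∀ i, ⌊y i⌋ = ⌊x i⌋ ∧ (Int.fract (y i) = 0 ↔ Int.fract (x i) = 0) := by
  obtain ⟨δ, ⟨hδr, hδz, hδρ⟩, α, hα, hxi⟩ := hx
  set a : ℤ := ⌊α⌋ with ha_def
  set β : ℝ := Int.fract α with hβ_def
  have hβ0 : 0 ≤ β := Int.fract_nonneg α
  have hβ1 : β < 1 := Int.fract_lt_one α
  have ha0 : 0 ≤ a := Int.floor_nonneg.mpr hα
  have hαab : (a : ℝ) + β = α := Int.floor_add_fract α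
  set s : ℝ := x 0 - m with hs_def
  set s' : ℝ := t' - m with hs'_def
  have hs : 0 < s := by simp only [hs_def]; linarith
  have hs1 : s < 1 := by simp only [hs_def]; linarith
  have hsp : 0 < s' := by simp only [hs'_def]; linarith
  have hsp1 : s' < 1 := by simp only [hs'_def]; linarith
  -- coordinates in normal form
  have hx_eq : ∀ i, x i = ((n i : ℤ) + a : ℤ) + (δ i + β) := by
    intro i; rw [hxi i]; push_cast; linarith
  have hu0 : ∀ i, 0 ≤ δ i + β := fun i => by have := (hδr i).1; linarith
  have hu2 : ∀ i, δ i + β < 2 := fun i => by have := (hδr i).2; linarith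
  -- floor and fract of each coordinate via Gmap
  have hfl : ∀ i, (⌊x i⌋ : ℝ) + Int.fract (x i) = x i := fun i => Int.floor_add_fract _
  have hGx : ∀ i, (⌊x i⌋ : ℝ) + gmap s s' (Int.fract (x i)) =
      ((n i : ℤ) + a : ℤ) + Gmap s s' (δ i + β) := by
    intro i
    by_cases h : δ i + β < 1
    · have hfloor : ⌊x i⌋ = (n i : ℤ) + a := by
        rw [hx_eq i, Int.floor_intCast_add, Int.floor_eq_zero_iff.mpr ⟨hu0 i, h⟩, add_zero]
      have hfract : Int.fract (x i) = δ i + β := by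
        rw [hx_eq i, Int.fract_intCast_add, Int.fract_eq_self.mpr ⟨hu0 i, h⟩]
      rw [hfloor, hfract, Gmap, if_pos h]
    · push_neg at h
      have hx_eq2 : x i = ((n i : ℤ) + a + 1 : ℤ) + (δ i + β - 1) := by
        rw [hx_eq i]; push_cast; ring
      have hfloor : ⌊x i⌋ = (n i : ℤ) + a + 1 := by
        rw [hx_eq2, Int.floor_intCast_add,
          Int.floor_eq_zero_iff.mpr ⟨by linarith, by have := hu2 i; linarith⟩, add_zero]
      have hfract : Int.fract (x i) = δ i + β - 1 := by
        rw [hx_eq2, Int.fract_intCast_add,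
          Int.fract_eq_self.mpr ⟨by linarith, by have := hu2 i; linarith⟩]
      rw [hfloor, hfract, Gmap, if_neg (not_lt.mpr h)]
      push_cast; ring
  set y : Fin (r + 1) → ℝ := fun i => (⌊x i⌋ : ℝ) + gmap s s' (Int.fract (x i)) with hy_def
  have hfr0 : ∀ i, 0 ≤ Int.fract (x i) := fun i => Int.fract_nonneg _
  have hfr1 : ∀ i, Int.fract (x i) < 1 := fun i => Int.fract_lt_one _
  have hg0 : ∀ i, 0 ≤ gmap s s' (Int.fract (x i)) :=
    fun i => gmap_nonneg hs hs1 hsp hsp1 (hfr0 i)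
  have hg1 : ∀ i, gmap s s' (Int.fract (x i)) < 1 :=
    fun i => gmap_lt_one hs hs1 hsp hsp1 (hfr1 i)
  have hyfloor : ∀ i, ⌊y i⌋ = ⌊x i⌋ := by
    intro i
    rw [hy_def]
    simp only
    rw [Int.floor_intCast_add, Int.floor_eq_zero_iff.mpr ⟨hg0 i, hg1 i⟩, add_zero]
  have hyfract : ∀ i, Int.fract (y i) = gmap s s' (Int.fract (x i)) := by
    intro i
    rw [hy_def]
    simp only
    rw [Int.fract_intCast_add, Int.fract_eq_self.mpr ⟨hg0 i, hg1 i⟩]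
  -- floor of x 0
  have hfl0 : ⌊x 0⌋ = m := by
    apply Int.floor_eq_iff.mpr
    exact ⟨hx0.le, by exact_mod_cast hx0'⟩
  have hfr0eq : Int.fract (x 0) = s := by
    rw [Int.fract, hfl0]
  -- Gmap monotone facts
  have hGmono := Gmap_strictMonoOn hs hs1 hsp hsp1
  have hmemu : ∀ i, δ i + β ∈ Set.Ico (0:ℝ) 2 := fun i => ⟨hu0 i, hu2 i⟩
  have hmemβ : β ∈ Set.Ico (0:ℝ) 2 := ⟨hβ0, by linarith⟩
  have hGβ : Gmap s s' β = gmap s s' β := by rw [Gmap, if_pos hβ1]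
  -- the new δ and α
  set α' : ℝ := (a : ℝ) + gmap s s' β with hα'_def
  set δ' : Fin (r + 1) → ℝ := fun i => Gmap s s' (δ i + β) - gmap s s' β with hδ'_def
  have hgβ0 : 0 ≤ gmap s s' β := gmap_nonneg hs hs1 hsp hsp1 hβ0
  have hgβ1 : gmap s s' β < 1 := gmap_lt_one hs hs1 hsp hsp1 hβ1
  have hδ'le : ∀ i j, δ' i ≤ δ' j ↔ δ i ≤ δ j := by
    intro i j
    simp only [hδ'_def, sub_le_sub_iff_right]
    rw [hGmono.le_iff_le (hmemu i) (hmemu j)]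
    constructor <;> intro h <;> linarith
  have hδ'zero : ∀ i, δ' i = 0 ↔ δ i = 0 := by
    intro i
    simp only [hδ'_def, sub_eq_zero, ← hGβ]
    constructor
    · intro h
      have := hGmono.injOn (hmemu i) hmemβ h
      linarith
    · intro h; rw [h, zero_add]
  have hδ'mem : δ' ∈ regionSimplex z ρ := by
    refine ⟨fun i => ⟨?_, ?_⟩, fun i => by rw [hδ'zero i]; exact hδz i, fun i j => by
      rw [hδ'le i j]; exact hδρ i j⟩
    · simp only [hδ'_def, sub_nonneg, ← hGβ]
      rw [hGmono.le_iff_le hmemβ (hmemu i)]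
      have := (hδr i).1; linarith
    · simp only [hδ'_def]
      rw [Gmap]
      split_ifs with h
      · have := gmap_lt_one hs hs1 hsp hsp1 h; linarith
      · push_neg at h
        have h2 : δ i + β - 1 < β := by have := (hδr i).2; linarith
        have := gmap_strictMono hs hs1 hsp hsp1 h2
        linarith
  have hy_trail : y ∈ simplicialTrail n (regionSimplex z ρ) := by
    refine ⟨δ', hδ'mem, α', ?_, ?_⟩
    · simp only [hα'_def]
      have : (0:ℝ) ≤ (a:ℝ) := by exact_mod_cast ha0
      linarith
    · intro i
      rw [hy_def]
      simp only
      rw [hGx i]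
      simp only [hδ'_def, hα'_def]
      push_cast
      ring
  refine ⟨y, hy_trail, ?_, fun i => ⟨hyfloor i, ?_⟩⟩
  · rw [hy_def]
    simp only
    rw [hfl0, hfr0eq, gmap_s hs hs1 hsp hsp1]
    simp [hs'_def]
  · rw [hyfract i]
    exact ⟨fun h => (gmap_eq_zero_iff hs hs1 hsp hsp1 (hfr0 i)).mp h,
      fun h => by rw [h]; exact gmap_zero hs hs1 hsp hsp1⟩

end Stmt5Aux

/-- The projection to the `t`-axis (coordinate `0`) of the intersection of a
finite union of simplicial trails with a guard polyhedron is a union of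
intervals with integral endpoints: its intersection with each open unit
interval `(m, m+1)` is all or nothing. -/
theorem stmt5 {r : ℕ} {ι : Type*} (I : Finset ι)
    (n : ι → Fin (r + 1) → ℕ)
    (z : ι → Fin (r + 1) → Prop) (ρ : ι → Fin (r + 1) → Fin (r + 1) → Prop)
    (J : Type*) (Jfin : Finset J)
    (gi : J → Fin (r + 1)) (gop : J → CmpOp) (gn : J → ℕ) :
    let T : Set (Fin (r + 1) → ℝ) :=
      (⋃ i ∈ I, simplicialTrail (n i) (regionSimplex (z i) (ρ i))) ∩
        {x | ∀ j ∈ Jfin, (gop j).sat (x (gi j)) ((gn j : ℝ))}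
    let P : Set ℝ := {t | ∃ x ∈ T, x 0 = t}
    ∀ m : ℤ, (∀ t ∈ Set.Ioo (m : ℝ) (m + 1), t ∉ P) ∨
      (∀ t ∈ Set.Ioo (m : ℝ) (m + 1), t ∈ P) := by
  intro T P m
  by_cases h : ∀ t ∈ Set.Ioo (m : ℝ) (m + 1), t ∉ P
  · exact Or.inl h
  · right
    push_neg at h
    obtain ⟨t0, ht0, ht0P⟩ := h
    obtain ⟨x, ⟨hxU, hxG⟩, hx0⟩ := ht0P
    obtain ⟨i, hiI, hxi⟩ := Set.mem_iUnion₂.mp hxU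
    intro t ht
    have hx0mem : (m : ℝ) < x 0 ∧ x 0 < m + 1 := by rw [hx0]; exact ⟨ht0.1, ht0.2⟩
    obtain ⟨y, hy_trail, hy0, hyff⟩ :=
      Stmt5Aux.key (n i) (z i) (ρ i) m hxi hx0mem.1 hx0mem.2 ht.1 ht.2
    refine ⟨y, ⟨Set.mem_iUnion₂.mpr ⟨i, hiI, hy_trail⟩, ?_⟩, hy0⟩
    intro j hj
    have hsat := hxG j hj
    have hcast : ((gn j : ℕ) : ℝ) = (((gn j : ℕ) : ℤ) : ℝ) := by push_cast; ring
    rw [hcast] at hsat ⊢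
    exact (Stmt5Aux.sat_congr (gop j) ((gn j : ℕ) : ℤ)
      (hyff (gi j)).1 (hyff (gi j)).2).mpr hsat
end

section
/- Region equivalence is preserved by equal time elapse in the following sense: if x and y are region-equivalent points of ℝ^{r+1} (all coordinates below M+1, same integer parts, same fractional-part ordering with the same zero pattern), then for every d ≥ 0 there exists d' ≥ 0 such that x + d·1 and y + d'·1 are region-equivalent. -/
/-- Region equivalence: same integer parts, same zero pattern and the same weak
ordering of the fractional parts. -/
def regEquiv {m : ℕ} (x y : Fin m → ℝ) : Prop :=
  (∀ i, ⌊x i⌋ = ⌊y i⌋) ∧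
  (∀ i, Int.fract (x i) = 0 ↔ Int.fract (y i) = 0) ∧
  (∀ i j, Int.fract (x i) ≤ Int.fract (x j) ↔ Int.fract (y i) ≤ Int.fract (y j))

lemma shift_floor_fract {u d : ℝ} (hd0 : 0 ≤ d) (hd1 : d < 1) :
    ⌊u + d⌋ = (if 1 ≤ Int.fract u + d then ⌊u⌋ + 1 else ⌊u⌋) ∧
    Int.fract (u + d) = (if 1 ≤ Int.fract u + d then Int.fract u + d - 1 else Int.fract u + d) := by
  have hu : (⌊u⌋ : ℝ) + Int.fract u = u := Int.floor_add_fract u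
  have hf0 : 0 ≤ Int.fract u := Int.fract_nonneg u
  have hf1 : Int.fract u < 1 := Int.fract_lt_one u
  by_cases h : 1 ≤ Int.fract u + d
  · have hfl : ⌊u + d⌋ = ⌊u⌋ + 1 := by
      rw [Int.floor_eq_iff]
      push_cast
      constructor <;> linarith
    refine ⟨by simp [h, hfl], ?_⟩
    have : Int.fract (u + d) = u + d - (⌊u + d⌋ : ℝ) := (Int.self_sub_floor _).symm
    rw [this, hfl]
    push_cast
    simp only [h, if_true]
    linarith
  · have hfl : ⌊u + d⌋ = ⌊u⌋ := by
      rw [Int.floor_eq_iff]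
      push_cast
      constructor <;> linarith [not_le.mp h]
    refine ⟨by simp [h, hfl], ?_⟩
    have : Int.fract (u + d) = u + d - (⌊u + d⌋ : ℝ) := (Int.self_sub_floor _).symm
    rw [this, hfl]
    simp only [h, if_false]
    linarith

lemma key {r : ℕ} {x y : Fin (r + 1) → ℝ} (h : regEquiv x y) {d d' : ℝ}
    (hd0 : 0 ≤ d) (hd1 : d < 1) (hd'0 : 0 ≤ d') (hd'1 : d' < 1)
    (h1 : ∀ j, 1 ≤ Int.fract (x j) + d ↔ 1 ≤ Int.fract (y j) + d')
    (h2 : ∀ j, Int.fract (x j) + d = 1 ↔ Int.fract (y j) + d' = 1)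
    (h3 : d = 0 ↔ d' = 0) :
    regEquiv (fun i => x i + d) (fun i => y i + d') := by
  obtain ⟨hfl, hz, hord⟩ := h
  have Fx : ∀ j, ⌊x j + d⌋ = (if 1 ≤ Int.fract (x j) + d then ⌊x j⌋ + 1 else ⌊x j⌋) ∧
      Int.fract (x j + d) =
        (if 1 ≤ Int.fract (x j) + d then Int.fract (x j) + d - 1 else Int.fract (x j) + d) :=
    fun j => shift_floor_fract hd0 hd1
  have Fy : ∀ j, ⌊y j + d'⌋ = (if 1 ≤ Int.fract (y j) + d' then ⌊y j⌋ + 1 else ⌊y j⌋) ∧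
      Int.fract (y j + d') =
        (if 1 ≤ Int.fract (y j) + d' then Int.fract (y j) + d' - 1 else Int.fract (y j) + d') :=
    fun j => shift_floor_fract hd'0 hd'1
  refine ⟨fun j => ?_, fun j => ?_, fun i j => ?_⟩
  · rw [(Fx j).1, (Fy j).1]
    by_cases hb : 1 ≤ Int.fract (x j) + d
    · rw [if_pos hb, if_pos ((h1 j).mp hb), hfl j]
    · rw [if_neg hb, if_neg (fun c => hb ((h1 j).mpr c)), hfl j]
  · rw [(Fx j).2, (Fy j).2]
    by_cases hb : 1 ≤ Int.fract (x j) + d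
    · rw [if_pos hb, if_pos ((h1 j).mp hb)]
      constructor <;> intro he
      · have : Int.fract (x j) + d = 1 := by linarith
        have := (h2 j).mp this; linarith
      · have : Int.fract (y j) + d' = 1 := by linarith
        have := (h2 j).mpr this; linarith
    · rw [if_neg hb, if_neg (fun c => hb ((h1 j).mpr c))]
      have hx0 := Int.fract_nonneg (x j)
      have hy0 := Int.fract_nonneg (y j)
      constructor <;> intro he
      · have hxz : Int.fract (x j) = 0 := by linarith
        have hdz : d = 0 := by linarith
        have : Int.fract (y j) = 0 := (hz j).mp hxz
        rw [this, h3.mp hdz]; ring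
      · have hyz : Int.fract (y j) = 0 := by linarith
        have hdz : d' = 0 := by linarith
        have : Int.fract (x j) = 0 := (hz j).mpr hyz
        rw [this, h3.mpr hdz]; ring
  · rw [(Fx i).2, (Fx j).2, (Fy i).2, (Fy j).2]
    have hxi0 := Int.fract_nonneg (x i); have hxi1 := Int.fract_lt_one (x i)
    have hxj0 := Int.fract_nonneg (x j); have hxj1 := Int.fract_lt_one (x j)
    have hyi0 := Int.fract_nonneg (y i); have hyi1 := Int.fract_lt_one (y i)
    have hyj0 := Int.fract_nonneg (y j); have hyj1 := Int.fract_lt_one (y j)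
    by_cases hbi : 1 ≤ Int.fract (x i) + d <;> by_cases hbj : 1 ≤ Int.fract (x j) + d
    · rw [if_pos hbi, if_pos hbj, if_pos ((h1 i).mp hbi), if_pos ((h1 j).mp hbj)]
      constructor <;> intro hle
      · have : Int.fract (x i) ≤ Int.fract (x j) := by linarith
        have := (hord i j).mp this; linarith
      · have : Int.fract (y i) ≤ Int.fract (y j) := by linarith
        have := (hord i j).mpr this; linarith
    · rw [if_pos hbi, if_neg hbj, if_pos ((h1 i).mp hbi),
        if_neg (fun c => hbj ((h1 j).mpr c))]
      constructor <;> intro _ <;> linarith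
    · rw [if_neg hbi, if_pos hbj, if_neg (fun c => hbi ((h1 i).mpr c)),
        if_pos ((h1 j).mp hbj)]
      constructor <;> intro hle <;> linarith
    · rw [if_neg hbi, if_neg hbj, if_neg (fun c => hbi ((h1 i).mpr c)),
        if_neg (fun c => hbj ((h1 j).mpr c))]
      constructor <;> intro hle
      · have : Int.fract (x i) ≤ Int.fract (x j) := by linarith
        have := (hord i j).mp this; linarith
      · have : Int.fract (y i) ≤ Int.fract (y j) := by linarith
        have := (hord i j).mpr this; linarith

lemma small_case {r : ℕ} (x y : Fin (r + 1) → ℝ) (h : regEquiv x y)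
    (d : ℝ) (hd0 : 0 ≤ d) (hd1 : d < 1) :
    ∃ d' : ℝ, 0 ≤ d' ∧ d' < 1 ∧ regEquiv (fun i => x i + d) (fun i => y i + d') := by
  obtain ⟨hfl, hz, hord⟩ := h
  rcases eq_or_lt_of_le hd0 with hdz | hdpos
  · -- d = 0
    refine ⟨0, le_refl 0, one_pos, key ⟨hfl, hz, hord⟩ hd0 hd1 (le_refl 0) one_pos
      (fun j => ?_) (fun j => ?_) (by simp [← hdz])⟩
    · rw [← hdz]
      simp only [add_zero]
      exact ⟨fun c => absurd c (not_le.mpr (Int.fract_lt_one _)),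
        fun c => absurd c (not_le.mpr (Int.fract_lt_one _))⟩
    · rw [← hdz]
      simp only [add_zero]
      exact ⟨fun c => absurd c (ne_of_lt (Int.fract_lt_one _)),
        fun c => absurd c (ne_of_lt (Int.fract_lt_one _))⟩
  · by_cases hex : ∃ i0, Int.fract (x i0) + d = 1
    · obtain ⟨i0, hi0⟩ := hex
      have hxi0pos : 0 < Int.fract (x i0) := by linarith
      have hxne : Int.fract (x i0) ≠ 0 := ne_of_gt hxi0pos
      have hyne : Int.fract (y i0) ≠ 0 := fun c => hxne ((hz i0).mpr c)
      have hyi0pos : 0 < Int.fract (y i0) :=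
        lt_of_le_of_ne (Int.fract_nonneg _) (Ne.symm hyne)
      have hyi01 : Int.fract (y i0) < 1 := Int.fract_lt_one _
      refine ⟨1 - Int.fract (y i0), by linarith, by linarith,
        key ⟨hfl, hz, hord⟩ hd0 hd1 (by linarith) (by linarith)
          (fun j => ?_) (fun j => ?_) ⟨fun c => absurd c hdpos.ne',
            fun c => absurd c (by intro c'; linarith)⟩⟩
      · constructor <;> intro hle
        · have : Int.fract (x i0) ≤ Int.fract (x j) := by linarith
          have := (hord i0 j).mp this; linarith
        · have : Int.fract (y i0) ≤ Int.fract (y j) := by linarith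
          have := (hord i0 j).mpr this; linarith
      · constructor <;> intro he
        · have h1 : Int.fract (x i0) ≤ Int.fract (x j) := by linarith
          have h2 : Int.fract (x j) ≤ Int.fract (x i0) := by linarith
          have := (hord i0 j).mp h1
          have := (hord j i0).mp h2
          linarith
        · have h1 : Int.fract (y i0) ≤ Int.fract (y j) := by linarith
          have h2 : Int.fract (y j) ≤ Int.fract (y i0) := by linarith
          have := (hord i0 j).mpr h1
          have := (hord j i0).mpr h2
          linarith
    · push_neg at hex
      have hne : (Finset.univ : Finset (Fin (r + 1))).Nonempty := Finset.univ_nonempty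
      set a := Finset.univ.sup' hne
        (fun j => if 1 ≤ Int.fract (x j) + d then (0 : ℝ) else Int.fract (y j)) with ha
      set b := Finset.univ.inf' hne
        (fun j => if 1 ≤ Int.fract (x j) + d then Int.fract (y j) else (1 : ℝ)) with hb
      have ha0 : 0 ≤ a := by
        apply Finset.le_sup'_of_le _ (Finset.mem_univ hne.choose)
        split <;> [exact le_refl 0; exact Int.fract_nonneg _]
      have ha1 : a < 1 := by
        rw [ha, Finset.sup'_lt_iff]
        intro j _
        split <;> [exact one_pos; exact Int.fract_lt_one _]
      have hb1 : b ≤ 1 := by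
        apply Finset.inf'_le_of_le _ (Finset.mem_univ hne.choose)
        split <;> [exact le_of_lt (Int.fract_lt_one _); exact le_refl 1]
      have hb0 : 0 < b := by
        rw [hb, Finset.lt_inf'_iff]
        intro j _
        split
        · next hj =>
            have hxj : 0 < Int.fract (x j) := by linarith
            have : Int.fract (y j) ≠ 0 := fun c => (ne_of_gt hxj) ((hz j).mpr c)
            exact lt_of_le_of_ne (Int.fract_nonneg _) (Ne.symm this)
        · exact one_pos
      have hab : a < b := by
        rw [ha, hb, Finset.sup'_lt_iff]
        intro j _
        rw [Finset.lt_inf'_iff]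
        intro k _
        by_cases hj : 1 ≤ Int.fract (x j) + d <;> by_cases hk : 1 ≤ Int.fract (x k) + d
        · rw [if_pos hj, if_pos hk]
          have hxk : 0 < Int.fract (x k) := by linarith
          have : Int.fract (y k) ≠ 0 := fun c => (ne_of_gt hxk) ((hz k).mpr c)
          exact lt_of_le_of_ne (Int.fract_nonneg _) (Ne.symm this)
        · rw [if_pos hj, if_neg hk]; exact one_pos
        · rw [if_neg hj, if_pos hk]
          have hjk : Int.fract (x j) < Int.fract (x k) := by
            push_neg at hj; linarith
          have : ¬ Int.fract (y k) ≤ Int.fract (y j) := by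
            intro c
            have := (hord k j).mpr c
            linarith
          exact not_le.mp this
        · rw [if_neg hj, if_neg hk]; exact Int.fract_lt_one _
      refine ⟨1 - (a + b) / 2, by linarith, by linarith,
        key ⟨hfl, hz, hord⟩ hd0 hd1 (by linarith) (by linarith)
          (fun j => ?_) (fun j => ?_) ⟨fun c => absurd c hdpos.ne',
            fun c => absurd c (by intro c'; linarith)⟩⟩
      · constructor <;> intro hle
        · have : b ≤ Int.fract (y j) := by
            apply Finset.inf'_le_of_le _ (Finset.mem_univ j)
            rw [if_pos hle]
          linarith
        · by_contra hc
          have : Int.fract (y j) ≤ a :=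
            Finset.le_sup'_of_le _ (Finset.mem_univ j) (by rw [if_neg hc])
          linarith
      · constructor <;> intro he
        · exact absurd he (hex j)
        · by_cases hc : 1 ≤ Int.fract (x j) + d
          · have : b ≤ Int.fract (y j) := by
              apply Finset.inf'_le_of_le _ (Finset.mem_univ j)
              rw [if_pos hc]
            linarith
          · have : Int.fract (y j) ≤ a :=
              Finset.le_sup'_of_le _ (Finset.mem_univ j) (by rw [if_neg hc])
            linarith

/-- Region equivalence is preserved by equal time elapse: for every delay
`d ≥ 0` there is a delay `d' ≥ 0` matching it. -/
theorem stmt7 {r : ℕ} (x y : Fin (r + 1) → ℝ) (h : regEquiv x y) :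
    ∀ d : ℝ, 0 ≤ d → ∃ d' : ℝ, 0 ≤ d' ∧
      regEquiv (fun i => x i + d) (fun i => y i + d') := by
  intro d hd
  obtain ⟨d'0, hd'0, hd'1, ⟨hfl, hz, hord⟩⟩ :=
    small_case x y h (Int.fract d) (Int.fract_nonneg d) (Int.fract_lt_one d)
  have hn : (0 : ℤ) ≤ ⌊d⌋ := Int.floor_nonneg.mpr hd
  refine ⟨d'0 + ⌊d⌋, by positivity, ?_, ?_, ?_⟩
  · intro i
    have hx : x i + d = (x i + Int.fract d) + (⌊d⌋ : ℤ) := by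
      have := Int.fract_add_floor d; linarith
    have hy : y i + (d'0 + ⌊d⌋) = (y i + d'0) + (⌊d⌋ : ℤ) := by push_cast; ring
    simp only [hx, hy, Int.floor_add_intCast]
    exact congrArg (· + ⌊d⌋) (hfl i)
  · intro i
    have hx : x i + d = (x i + Int.fract d) + (⌊d⌋ : ℤ) := by
      have := Int.fract_add_floor d; linarith
    have hy : y i + (d'0 + ⌊d⌋) = (y i + d'0) + (⌊d⌋ : ℤ) := by push_cast; ring
    simp only [hx, hy, Int.fract_add_intCast]
    exact hz i
  · intro i j
    have hx : ∀ k, x k + d = (x k + Int.fract d) + (⌊d⌋ : ℤ) := fun k => by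
      have := Int.fract_add_floor d; linarith
    have hy : ∀ k, y k + (d'0 + ⌊d⌋) = (y k + d'0) + (⌊d⌋ : ℤ) := fun k => by
      push_cast; ring
    simp only [hx, hy, Int.fract_add_intCast]
    exact hord i j
end

section
/- Let G be a finite directed weighted graph (weights in ℕ) with initial node g₀, and suppose every sufficiently long path from g₀ (of total weight ≥ t₀) passes through a node of a cycle of positive total weight d, where d divides L. Then for every path γ from g₀ of total weight w ≥ t₀ and every k ∈ ℕ, there exists a path γ' from g₀ with the same final node as γ and total weight w + k·L. -/
lemma pathWeight_split {V : Type*} (w : V → V → ℕ) (a : List V) (v : V) (b : List V) :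
    pathWeight w (a ++ v :: b) = pathWeight w (a ++ [v]) + pathWeight w (v :: b) := by
  induction a with
  | nil => simp [pathWeight]
  | cons x l ih =>
    cases l with
    | nil => simp [pathWeight]
    | cons y t =>
      simp only [List.cons_append, List.append_eq, pathWeight] at *
      rw [ih]; ring

lemma splice {V : Type*} (E : V → V → Prop) (w : V → V → ℕ)
    (γ : List V) (v : V) (hv : v ∈ γ) (c : List V) (hlen : 2 ≤ c.length)
    (hch : c.head? = some v) (hcl : c.getLast? = some v)
    (hcchain : List.Chain' E c) (hγ : List.Chain' E γ) :
    ∃ γ', γ'.head? = γ.head? ∧ List.Chain' E γ' ∧ γ'.getLast? = γ.getLast? ∧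
      v ∈ γ' ∧ pathWeight w γ' = pathWeight w γ + pathWeight w c := by
  obtain ⟨a, b, rfl⟩ := List.append_of_mem hv
  obtain ⟨cs, rfl⟩ : ∃ cs, c = v :: cs := by
    cases c with
    | nil => simp at hch
    | cons x t =>
      simp only [List.head?] at hch
      exact ⟨t, by rw [Option.some_inj] at hch; rw [hch]⟩
  have hcs : cs ≠ [] := by
    intro h; subst h; simp at hlen
  obtain ⟨ds, rfl⟩ : ∃ ds, cs = ds ++ [v] := by
    refine ⟨cs.dropLast, ?_⟩
    have h1 := List.dropLast_append_getLast hcs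
    have h2 : cs.getLast hcs = v := by
      have h3 : (v :: cs).getLast? = cs.getLast? := by
        rw [List.getLast?_eq_getLast (l := v :: cs) (by simp), List.getLast?_eq_getLast hcs]
        simp [List.getLast_cons hcs]
      rw [h3, List.getLast?_eq_getLast hcs] at hcl
      exact Option.some_injective _ hcl
    rw [h2] at h1; exact h1.symm
  rw [List.Chain', List.isChain_append] at hγ
  have hcchain2 : List.Chain' E ((v :: ds) ++ [v]) := by simpa using hcchain
  rw [List.Chain', List.isChain_append] at hcchain2
  obtain ⟨ha, hvb, hlink⟩ := hγ
  obtain ⟨hvds, _, hcyclink⟩ := hcchain2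
  refine ⟨a ++ v :: (ds ++ v :: b), ?_, ?_, ?_, ?_, ?_⟩
  · cases a <;> simp
  · rw [List.Chain', List.isChain_append]
    refine ⟨ha, ?_, by simpa using hlink⟩
    have : v :: (ds ++ v :: b) = (v :: ds) ++ (v :: b) := by simp
    rw [this, List.isChain_append]
    exact ⟨hvds, hvb, by simpa using hcyclink⟩
  · have h4 : v :: (ds ++ v :: b) = (v :: ds) ++ (v :: b) := by simp
    rw [List.getLast?_append, List.getLast?_append, h4, List.getLast?_append]
    rw [List.getLast?_eq_getLast (l := v :: b) (by simp)]
    simp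
  · simp
  · rw [pathWeight_split, pathWeight_split w a v b]
    have h4 : v :: (ds ++ v :: b) = (v :: ds) ++ (v :: b) := by simp
    rw [h4, pathWeight_split w (v :: ds) v b]
    have h5 : (v :: ds) ++ [v] = v :: (ds ++ [v]) := by simp
    rw [← h5]
    ring

/-- If every path from `g0` of total weight ≥ `t₀` passes through a node lying
on a cycle of positive total weight dividing `L`, then reachability weights can
be shifted by any multiple of `L`: for every path `γ` of total weight `≥ t₀`
and every `k` there is a path with the same final node and total weight
`pathWeight γ + k·L`. -/
theorem stmt10 {V : Type*} [Fintype V] (E : V → V → Prop) (w : V → V → ℕ)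
    (g0 : V) (t₀ L : ℕ) (hL : 0 < L)
    (hcyc : ∀ γ : List V, γ.head? = some g0 → List.Chain' E γ →
      t₀ ≤ pathWeight w γ →
      ∃ v ∈ γ, ∃ c : List V, 2 ≤ c.length ∧ c.head? = some v ∧
        c.getLast? = some v ∧ List.Chain' E c ∧ 0 < pathWeight w c ∧
        pathWeight w c ∣ L) :
    ∀ γ : List V, γ.head? = some g0 → List.Chain' E γ →
      t₀ ≤ pathWeight w γ → ∀ k : ℕ,
      ∃ γ' : List V, γ'.head? = some g0 ∧ List.Chain' E γ' ∧
        γ'.getLast? = γ.getLast? ∧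
        pathWeight w γ' = pathWeight w γ + k * L := by
  -- one-step lemma: shift by L
  have step : ∀ γ : List V, γ.head? = some g0 → List.Chain' E γ →
      t₀ ≤ pathWeight w γ →
      ∃ γ' : List V, γ'.head? = some g0 ∧ List.Chain' E γ' ∧
        γ'.getLast? = γ.getLast? ∧
        pathWeight w γ' = pathWeight w γ + L := by
    intro γ hh hc ht
    obtain ⟨v, hv, c, hlen, hch, hcl, hcchain, hdpos, hddvd⟩ := hcyc γ hh hc ht
    obtain ⟨m, hm⟩ := hddvd
    -- repeatedly splice the cycle m times
    have key : ∀ n : ℕ, ∃ γ' : List V, γ'.head? = γ.head? ∧ List.Chain' E γ' ∧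
        γ'.getLast? = γ.getLast? ∧ v ∈ γ' ∧
        pathWeight w γ' = pathWeight w γ + n * pathWeight w c := by
      intro n
      induction n with
      | zero => exact ⟨γ, rfl, hc, rfl, hv, by simp⟩
      | succ n ih =>
        obtain ⟨γ', h1, h2, h3, h4, h5⟩ := ih
        obtain ⟨γ'', g1, g2, g3, g4, g5⟩ := splice E w γ' v h4 c hlen hch hcl hcchain h2
        exact ⟨γ'', g1.trans h1, g2, g3.trans h3, g4,
          by rw [g5, h5]; ring⟩
    obtain ⟨γ', h1, h2, h3, _, h5⟩ := key m
    exact ⟨γ', h1.trans hh, h2, h3, by rw [h5, hm]; ring⟩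
  intro γ hh hc ht k
  induction k with
  | zero => exact ⟨γ, hh, hc, rfl, by simp⟩
  | succ k ih =>
    obtain ⟨γ', h1, h2, h3, h4⟩ := ih
    have ht' : t₀ ≤ pathWeight w γ' := by omega
    obtain ⟨γ'', g1, g2, g3, g4⟩ := step γ' h1 h2 ht'
    exact ⟨γ'', g1, g2, g3.trans h3, by rw [g4, h4]; ring⟩
end

section
/- Let A ⊆ ℝ≥0 be eventually L₁-periodic after time t₁ and B ⊆ ℝ≥0 eventually L₂-periodic after time t₂ (with L₁, L₂ positive integers). Then A ⊆ B if and only if A ∩ [0, t + L] ⊆ B ∩ [0, t + L], where t = max(t₁, t₂) and L = lcm(L₁, L₂). In particular, if membership in A ∩ ℚ and B ∩ ℚ on [0, t + L] is decidable, inclusion A ⊆ B is decidable when A and B are unions of integer points and open unit intervals with integer endpoints. -/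
/-- `S` is eventually `L`-periodic after time `t₀`. -/
def evPer (S : Set ℝ) (t₀ L : ℝ) : Prop := ∀ s : ℝ, t₀ ≤ s → (s ∈ S ↔ s + L ∈ S)

/-- Inclusion of eventually periodic subsets of `ℝ≥0` reduces to inclusion on
the bounded window `[0, max t₁ t₂ + lcm L₁ L₂]`. -/
theorem stmt16 (A B : Set ℝ) (hA0 : A ⊆ Set.Ici 0) (hB0 : B ⊆ Set.Ici 0)
    (t₁ t₂ : ℝ) (ht₁ : 0 ≤ t₁) (ht₂ : 0 ≤ t₂)
    (L₁ L₂ : ℕ) (hL₁ : 0 < L₁) (hL₂ : 0 < L₂)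
    (hA : evPer A t₁ L₁) (hB : evPer B t₂ L₂) :
    A ⊆ B ↔
      A ∩ Set.Icc 0 (max t₁ t₂ + (Nat.lcm L₁ L₂ : ℝ)) ⊆
        B ∩ Set.Icc 0 (max t₁ t₂ + (Nat.lcm L₁ L₂ : ℝ)) := by
  constructor
  · intro h s hs
    exact ⟨h hs.1, hs.2⟩
  · intro h
    set t : ℝ := max t₁ t₂ with ht
    set L : ℝ := (Nat.lcm L₁ L₂ : ℝ) with hLdef
    have hL1 : (1 : ℝ) ≤ L := by
      have : 1 ≤ Nat.lcm L₁ L₂ := Nat.one_le_iff_ne_zero.mpr (Nat.lcm_ne_zero hL₁.ne' hL₂.ne')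
      rw [hLdef]; exact_mod_cast this
    have hLpos : (0 : ℝ) < L := lt_of_lt_of_le one_pos hL1
    -- upgrade periodicity to period L after time t
    have key : ∀ (S : Set ℝ) (t₀ : ℝ) (L₀ : ℕ), t₀ ≤ t → evPer S t₀ L₀ → L₀ ∣ Nat.lcm L₁ L₂ →
        evPer S t L := by
      intro S t₀ L₀ ht0 hS hdvd
      obtain ⟨k, hk⟩ := hdvd
      have base : ∀ m : ℕ, ∀ s : ℝ, t₀ ≤ s → (s ∈ S ↔ s + m * L₀ ∈ S) := by
        intro m
        induction m with
        | zero => intro s hs; simp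
        | succ m ih =>
          intro s hs
          have h1 := ih s hs
          have h2 := hS (s + m * L₀) (le_trans hs (by nlinarith [(Nat.cast_nonneg m : (0:ℝ) ≤ m), (Nat.cast_nonneg L₀ : (0:ℝ) ≤ L₀)]))
          rw [h1, h2]
          push_cast; ring_nf
      intro s hs
      have := base k s (le_trans ht0 hs)
      rwa [show (s + L) = s + k * L₀ by rw [hLdef, hk]; push_cast; ring]
    have hA' : evPer A t L := key A t₁ L₁ (le_max_left _ _) hA (Nat.dvd_lcm_left _ _)
    have hB' : evPer B t L := key B t₂ L₂ (le_max_right _ _) hB (Nat.dvd_lcm_right _ _)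
    have ht0 : (0 : ℝ) ≤ t := le_trans ht₁ (le_max_left _ _)
    have main : ∀ n : ℕ, ∀ s : ℝ, s ∈ A → s ≤ t + L + n * L → s ∈ B := by
      intro n
      induction n with
      | zero =>
        intro s hsA hsle
        simp only [Nat.cast_zero, zero_mul, add_zero] at hsle
        exact (h ⟨hsA, hA0 hsA, hsle⟩).1
      | succ n ih =>
        intro s hsA hsle
        by_cases hc : s ≤ t + L + n * L
        · exact ih s hsA hc
        · push_neg at hc
          have hst : t ≤ s - L := by nlinarith [hLpos, (Nat.cast_nonneg n : (0:ℝ) ≤ n)]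
          have hAmem : s - L ∈ A := by
            have := hA' (s - L) hst
            rw [sub_add_cancel] at this
            exact this.mpr hsA
          have hBmem : s - L ∈ B := by
            apply ih _ hAmem
            push_cast at hsle ⊢
            linarith
          have := hB' (s - L) hst
          rw [sub_add_cancel] at this
          exact this.mp hBmem
    intro s hsA
    have hs0 : (0 : ℝ) ≤ s := hA0 hsA
    refine main ⌈s⌉₊ s hsA ?_
    have h1 : s ≤ (⌈s⌉₊ : ℝ) := Nat.le_ceil s
    have h2 : (⌈s⌉₊ : ℝ) ≤ ⌈s⌉₊ * L := le_mul_of_one_le_right (Nat.cast_nonneg _) hL1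
    linarith
end

section
/- If S ⊆ ℝ≥0 is a union of integer points and open unit intervals with integer endpoints, is eventually L-periodic after integer time t_per, and contains the integer point n and the interval (n, n+1) for every integer 0 ≤ n < t_per + L, then S = ℝ≥0. -/
/-- Finite-check criterion for universality of a timestamp: a union of integer
points and open unit intervals that is eventually `L`-periodic after `t_per`
and is full below `t_per + L` equals all of `ℝ≥0`. -/
theorem stmt17 (S : Set ℝ) (hS0 : S ⊆ Set.Ici 0)
    (tper L : ℕ) (htper : 0 < tper) (hL : 0 < L)
    (hstruct : ∀ n : ℕ, S ∩ Set.Ioo (n : ℝ) (n + 1) = ∅ ∨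
      Set.Ioo (n : ℝ) (n + 1) ⊆ S)
    (hper : ∀ s : ℝ, (tper : ℝ) ≤ s → (s ∈ S ↔ s + L ∈ S))
    (hfull : ∀ n : ℕ, n < tper + L →
      ((n : ℝ) ∈ S ∧ Set.Ioo (n : ℝ) (n + 1) ⊆ S)) :
    S = Set.Ici 0 := by
  have key : ∀ n : ℕ, ((n : ℝ) ∈ S ∧ Set.Ioo (n : ℝ) (n + 1) ⊆ S) := by
    intro n
    induction n using Nat.strong_induction_on with
    | _ n ih =>
      by_cases h : n < tper + L
      · exact hfull n h
      · push_neg at h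
        have hLn : L ≤ n := by omega
        obtain ⟨h1, h2⟩ := ih (n - L) (by omega)
        have hcast : ((n - L : ℕ) : ℝ) = (n : ℝ) - L := by
          push_cast [Nat.cast_sub hLn]; ring
        have htle : (tper : ℝ) ≤ (n : ℝ) - L := by
          have : (tper : ℝ) + L ≤ (n : ℝ) := by exact_mod_cast (by omega : tper + L ≤ n)
          linarith
        rw [hcast] at h1 h2
        constructor
        · have := (hper ((n : ℝ) - L) htle).mp h1
          simpa using this
        · intro x hx
          have hx1 : x - L ∈ Set.Ioo ((n : ℝ) - L) ((n : ℝ) - L + 1) :=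
            ⟨by linarith [hx.1], by linarith [hx.2]⟩
          have hmem := h2 hx1
          have := (hper (x - L) (by linarith [hx.1])).mp hmem
          simpa using this
  apply Set.Subset.antisymm hS0
  intro x hx
  have hx0 : (0 : ℝ) ≤ x := hx
  set n : ℕ := ⌊x⌋.toNat with hn
  have hfl : (0 : ℤ) ≤ ⌊x⌋ := Int.floor_nonneg.mpr hx0
  have hnx : ((n : ℕ) : ℝ) = (⌊x⌋ : ℝ) := by
    rw [hn]; exact_mod_cast Int.toNat_of_nonneg hfl
  have hle : (n : ℝ) ≤ x := by rw [hnx]; exact Int.floor_le x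
  have hlt : x < (n : ℝ) + 1 := by rw [hnx]; exact Int.lt_floor_add_one x
  rcases eq_or_lt_of_le hle with heq | hlt'
  · rw [← heq]; exact (key n).1
  · exact (key n).2 ⟨hlt', hlt⟩
end
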